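/- The function λ ↦ σ_2(λ)^{1/2} is concave on the cone Γ_2 ⊂ ℝ^n. -/

import Mathlib

open Finset

def sigma1 {n : ℕ} (lam : Fin n → ℝ) : ℝ := ∑ i, lam i

def sigma2 {n : ℕ} (lam : Fin n → ℝ) : ℝ :=
  ∑ i, ∑ j, if i < j then lam i * lam j else 0

/-- polarization of sigma2 -/
def sigmaB {n : ℕ} (lam mu : Fin n → ℝ) : ℝ :=
  ∑ i, ∑ j, if i < j then lam i * mu j + mu i * lam j else 0

lemma sigma2_expand {n : ℕ} (a b : ℝ) (lam mu : Fin n → ℝ) :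
    sigma2 (fun i => a * lam i + b * mu i)
      = a ^ 2 * sigma2 lam + a * b * sigmaB lam mu + b ^ 2 * sigma2 mu := by
  simp only [sigma2, sigmaB, Finset.mul_sum, ← Finset.sum_add_distrib]
  refine Finset.sum_congr rfl fun i _ => Finset.sum_congr rfl fun j _ => ?_
  split_ifs <;> ring

lemma sigma2_eq {n : ℕ} (v : Fin n → ℝ) :
    2 * sigma2 v = (sigma1 v) ^ 2 - ∑ i, (v i) ^ 2 := by
  have h1 : (sigma1 v) ^ 2 = ∑ i, ∑ j, v i * v j := by
    simp [sigma1, sq, Finset.sum_mul_sum]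
  have h2 : ∀ i j : Fin n, v i * v j =
      (if i < j then v i * v j else 0) + (if j < i then v i * v j else 0)
        + (if i = j then v i * v j else 0) := by
    intro i j
    rcases lt_trichotomy i j with h | h | h
    · simp [h, h.ne, h.asymm]
    · simp [h]
    · simp [h, h.ne', h.asymm]
  have h3 : (∑ i, ∑ j, if (j : Fin n) < i then v i * v j else 0) = sigma2 v := by
    rw [Finset.sum_comm]
    simp only [sigma2]
    refine Finset.sum_congr rfl fun i _ => Finset.sum_congr rfl fun j _ => ?_
    split_ifs <;> ring
  have h4 : (∑ i : Fin n, ∑ j, if i = j then v i * v j else 0) = ∑ i, (v i) ^ 2 := by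
    refine Finset.sum_congr rfl fun i _ => ?_
    simp [Finset.sum_ite_eq, sq]
  have hsplit : (∑ i, ∑ j, v i * v j)
      = (∑ i, ∑ j, if (i : Fin n) < j then v i * v j else 0)
        + (∑ i, ∑ j, if (j : Fin n) < i then v i * v j else 0)
        + (∑ i : Fin n, ∑ j, if i = j then v i * v j else 0) := by
    rw [show (∑ i, ∑ j, v i * v j)
        = ∑ i : Fin n, ∑ j, ((if i < j then v i * v j else 0)
          + (if j < i then v i * v j else 0) + (if i = j then v i * v j else 0)) from
      Finset.sum_congr rfl fun i _ => Finset.sum_congr rfl fun j _ => h2 i j]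
    simp [Finset.sum_add_distrib]
  rw [h1, hsplit, h3, h4]
  unfold sigma2
  ring

theorem stmt3 (n : ℕ) (hn : 2 ≤ n) (lam mu : Fin n → ℝ)
    (hlam : 0 < sigma1 lam ∧ 0 < sigma2 lam)
    (hmu : 0 < sigma1 mu ∧ 0 < sigma2 mu)
    (t : ℝ) (ht0 : 0 ≤ t) (ht1 : t ≤ 1) :
    Real.sqrt (sigma2 (fun i => t * lam i + (1 - t) * mu i))
      ≥ t * Real.sqrt (sigma2 lam) + (1 - t) * Real.sqrt (sigma2 mu) := by
  obtain ⟨h1l, h2l⟩ := hlam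
  obtain ⟨h1m, h2m⟩ := hmu
  set s : ℝ := sigma1 lam / sigma1 mu with hs
  have hspos : 0 < s := div_pos h1l h1m
  -- the vector lam - s • mu has sigma1 = 0
  have hv1 : sigma1 (fun i => 1 * lam i + (-s) * mu i) = 0 := by
    have h : sigma1 (fun i => 1 * lam i + (-s) * mu i) = sigma1 lam - s * sigma1 mu := by
      simp [sigma1, Finset.sum_add_distrib, ← Finset.mul_sum]
      ring
    rw [h, hs]
    field_simp
    ring
  have hv2 : sigma2 (fun i => 1 * lam i + (-s) * mu i) ≤ 0 := by
    have := sigma2_eq (fun i => 1 * lam i + (-s) * mu i)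
    nlinarith [Finset.sum_nonneg (fun i (_ : i ∈ Finset.univ) =>
      sq_nonneg (1 * lam i + (-s) * mu i))]
  rw [sigma2_expand] at hv2
  -- so: sigma2 lam - s * B + s^2 * sigma2 mu ≤ 0
  have hsqrt : Real.sqrt (sigma2 lam) * Real.sqrt (sigma2 mu)
      = Real.sqrt (sigma2 lam * sigma2 mu) := (Real.sqrt_mul h2l.le _).symm
  have hkey : 2 * Real.sqrt (sigma2 lam) * Real.sqrt (sigma2 mu) ≤ sigmaB lam mu := by
    have hA : Real.sqrt (sigma2 lam) ^ 2 = sigma2 lam := Real.sq_sqrt h2l.le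
    have hB : Real.sqrt (sigma2 mu) ^ 2 = sigma2 mu := Real.sq_sqrt h2m.le
    nlinarith [sq_nonneg (Real.sqrt (sigma2 lam) - s * Real.sqrt (sigma2 mu)),
      Real.sqrt_nonneg (sigma2 lam), Real.sqrt_nonneg (sigma2 mu), hspos]
  have hexp := sigma2_expand t (1 - t) lam mu
  have hlb : (t * Real.sqrt (sigma2 lam) + (1 - t) * Real.sqrt (sigma2 mu)) ^ 2
      ≤ sigma2 (fun i => t * lam i + (1 - t) * mu i) := by
    rw [hexp]
    have hA : Real.sqrt (sigma2 lam) ^ 2 = sigma2 lam := Real.sq_sqrt h2l.le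
    have hB : Real.sqrt (sigma2 mu) ^ 2 = sigma2 mu := Real.sq_sqrt h2m.le
    nlinarith [mul_nonneg ht0 (by linarith : (0:ℝ) ≤ 1 - t)]
  have hRnn : 0 ≤ t * Real.sqrt (sigma2 lam) + (1 - t) * Real.sqrt (sigma2 mu) := by
    have := Real.sqrt_nonneg (sigma2 lam)
    have := Real.sqrt_nonneg (sigma2 mu)
    nlinarith
  calc t * Real.sqrt (sigma2 lam) + (1 - t) * Real.sqrt (sigma2 mu)
      = Real.sqrt ((t * Real.sqrt (sigma2 lam) + (1 - t) * Real.sqrt (sigma2 mu)) ^ 2) :=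
        (Real.sqrt_sq hRnn).symm
    _ ≤ Real.sqrt (sigma2 (fun i => t * lam i + (1 - t) * mu i)) :=
        Real.sqrt_le_sqrt hlb
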